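/- The quantum-group boundary projector b has blob weight y = [α+1]_q/[α]_q: on V_α⊗ℂ²⊗ℂ², one has e ∘ (b⊗Id_{ℂ²}) ∘ e = ([α+1]_q/[α]_q) · e, where e acts as the Temperley–Lieb matrix on the two ℂ² factors and as the identity on V_α, and b acts on V_α and the first ℂ² factor. -/

import Mathlib

noncomputable section

/-- The Verma module `V_α`: finitely supported complex sequences, basis `|n⟩`. -/
abbrev Verma : Type := ℕ →₀ ℂ

/-- The basis vector `|n⟩`. -/
noncomputable def ket (n : ℕ) : Verma := Finsupp.single n 1

/-- The linear operator on `Verma` determined by its values on the basis vectors. -/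
noncomputable def ladderOp (t : ℕ → Verma) : Module.End ℂ Verma :=
  Finsupp.lsum ℂ fun n => LinearMap.toSpanSingleton ℂ Verma (t n)

/-- The q-deformed number `[x]_q` with `q = e^h`. -/
noncomputable def qnum (h x : ℂ) : ℂ :=
  (Complex.exp (h * x) - Complex.exp (-(h * x))) / (Complex.exp h - Complex.exp (-h))

/-- `E |n⟩ = [n]_q [α−n]_q |n−1⟩`, `E |0⟩ = 0`. -/
noncomputable def Eop (h α : ℂ) : Module.End ℂ Verma :=
  ladderOp fun n => if n = 0 then 0 else (qnum h n * qnum h (α - n)) • ket (n - 1)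

/-- `F |n⟩ = |n+1⟩`. -/
noncomputable def Fop : Module.End ℂ Verma := ladderOp fun n => ket (n + 1)

/-- `K |n⟩ = q^{α−1−2n} |n⟩`. -/
noncomputable def Kop (h α : ℂ) : Module.End ℂ Verma :=
  ladderOp fun n => Complex.exp (h * (α - 1 - 2 * n)) • ket n

/-- `K⁻¹ |n⟩ = q^{−(α−1−2n)} |n⟩`. -/
noncomputable def Kinv (h α : ℂ) : Module.End ℂ Verma :=
  ladderOp fun n => Complex.exp (-(h * (α - 1 - 2 * n))) • ket n

/-- Operators on `V_α ⊗ ℂ²` as 2×2 matrices with entries in `End(V_α)`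
(rows/columns indexed by the `ℂ²` basis `↑, ↓`). -/
abbrev Op2 : Type := Matrix (Fin 2) (Fin 2) (Module.End ℂ Verma)

/-- The projector `b_+` on the summand `V_{α+1}` of `V_α ⊗ ℂ²`. -/
noncomputable def bPlus (h α : ℂ) : Op2 :=
  (Complex.exp (h * α) - Complex.exp (-(h * α)))⁻¹ •
    !![(-Complex.exp (-h)) • Kinv h α + Complex.exp (h * α) • 1,
        (Complex.exp h - Complex.exp (-h)) • Fop;
        (Complex.exp h * (Complex.exp h - Complex.exp (-h))) • (Kinv h α * Eop h α),
        Complex.exp h • Kinv h α - Complex.exp (-(h * α)) • 1]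

/-- The projector `b_−` on the summand `V_{α-1}` of `V_α ⊗ ℂ²`. -/
noncomputable def bMinus (h α : ℂ) : Op2 :=
  (-(Complex.exp (h * α) - Complex.exp (-(h * α)))⁻¹) •
    !![(-Complex.exp (-h)) • Kinv h α + Complex.exp (-(h * α)) • 1,
        (Complex.exp h - Complex.exp (-h)) • Fop;
        (Complex.exp h * (Complex.exp h - Complex.exp (-h))) • (Kinv h α * Eop h α),
        Complex.exp h • Kinv h α - Complex.exp (h * α) • 1]

/-- The coproduct action `Δ(E) = 1⊗E + E⊗K` on `V_α ⊗ ℂ²`. -/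
noncomputable def coE (h α : ℂ) : Op2 :=
  !![Complex.exp h • Eop h α, 1; 0, Complex.exp (-h) • Eop h α]

/-- The coproduct action `Δ(F) = K⁻¹⊗F + F⊗1` on `V_α ⊗ ℂ²`. -/
noncomputable def coF (h α : ℂ) : Op2 :=
  !![Fop, 0; Kinv h α, Fop]

/-- The coproduct action `Δ(K) = K⊗K` on `V_α ⊗ ℂ²`. -/
noncomputable def coK (h α : ℂ) : Op2 :=
  !![Complex.exp h • Kop h α, 0; 0, Complex.exp (-h) • Kop h α]

/-- The coproduct action `Δ(K⁻¹) = K⁻¹⊗K⁻¹` on `V_α ⊗ ℂ²`. -/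
noncomputable def coKinv (h α : ℂ) : Op2 :=
  !![Complex.exp (-h) • Kinv h α, 0; 0, Complex.exp h • Kinv h α]

/-- Operators on `V_α ⊗ ℂ² ⊗ ℂ²` as matrices with entries in `End(V_α)`, indexed by pairs
(state of the first `ℂ²`, state of the second `ℂ²`). -/
abbrev Op4 : Type := Matrix (Fin 2 × Fin 2) (Fin 2 × Fin 2) (Module.End ℂ Verma)

/-- The Temperley–Lieb matrix on `ℂ² ⊗ ℂ²` (ordered basis ↑↑, ↑↓, ↓↑, ↓↓):
rows (0,0,0,0), (0, q, −1, 0), (0, −1, q⁻¹, 0), (0,0,0,0). -/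
noncomputable def eTL (h : ℂ) : Matrix (Fin 2 × Fin 2) (Fin 2 × Fin 2) ℂ :=
  Matrix.of fun p r =>
    if p = ((0 : Fin 2), (1 : Fin 2)) ∧ r = ((0 : Fin 2), (1 : Fin 2)) then Complex.exp h
    else if p = ((0 : Fin 2), (1 : Fin 2)) ∧ r = ((1 : Fin 2), (0 : Fin 2)) then -1
    else if p = ((1 : Fin 2), (0 : Fin 2)) ∧ r = ((0 : Fin 2), (1 : Fin 2)) then -1
    else if p = ((1 : Fin 2), (0 : Fin 2)) ∧ r = ((1 : Fin 2), (0 : Fin 2)) then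
      Complex.exp (-h)
    else 0

/-- `e` acting on the two `ℂ²` factors of `V_α ⊗ ℂ² ⊗ ℂ²`, identity on `V_α`. -/
noncomputable def eOp4 (h : ℂ) : Op4 :=
  Matrix.of fun p r => eTL h p r • (1 : Module.End ℂ Verma)

/-- `b ⊗ Id_{ℂ²}`: the boundary projector acting on `V_α` and the first `ℂ²` factor. -/
noncomputable def bFst (h α : ℂ) : Op4 :=
  Matrix.of fun p r => if p.2 = r.2 then bPlus h α p.1 r.1 else 0

set_option maxHeartbeats 1000000 in
/-- The quantum-group boundary projector `b` has blob weight
`y = [α+1]_q/[α]_q`: on `V_α ⊗ ℂ² ⊗ ℂ²`, `e ∘ (b⊗Id) ∘ e = ([α+1]_q/[α]_q) e`. -/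
theorem blob_weight_of_qgroup_projector (h α : ℂ) (hq : Complex.exp h ^ 2 ≠ 1)
    (hα : Complex.exp (h * α) ≠ Complex.exp (-(h * α))) :
    eOp4 h * bFst h α * eOp4 h = (qnum h (α + 1) / qnum h α) • eOp4 h := by
  have hq0 : Complex.exp h ≠ 0 := Complex.exp_ne_zero h
  have ht0 : Complex.exp (h * α) ≠ 0 := Complex.exp_ne_zero _
  have hqd : Complex.exp h - (Complex.exp h)⁻¹ ≠ 0 := by
    intro hc
    apply hq
    have h1 : Complex.exp h = (Complex.exp h)⁻¹ := sub_eq_zero.mp hc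
    field_simp at h1
    exact h1
  have htd : Complex.exp (h * α) - (Complex.exp (h * α))⁻¹ ≠ 0 := by
    rw [Complex.exp_neg] at hα
    exact sub_ne_zero.mpr hα
  have hqd2 : Complex.exp h ^ 2 - 1 ≠ 0 := sub_ne_zero.mpr hq
  have htd2 : Complex.exp (h * α) ^ 2 - 1 ≠ 0 := by
    intro hc
    apply htd
    have h2 : Complex.exp (h * α) ^ 2 = 1 := by linear_combination hc
    have h3 : (Complex.exp (h * α))⁻¹ = Complex.exp (h * α) := by
      field_simp
      linear_combination -h2
    rw [h3]
    ring
  have hA : (-1 + Complex.exp (h * α) ^ 2) ≠ 0 := by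
    intro hc; exact htd2 (by linear_combination hc)
  have hB : (-Complex.exp h + Complex.exp h * Complex.exp (h * α) ^ 2) ≠ 0 := by
    intro hc; exact (mul_ne_zero hq0 htd2) (by linear_combination hc)
  have hC : (-Complex.exp (h * α) + Complex.exp (h * α) ^ 3) ≠ 0 := by
    intro hc; exact (mul_ne_zero ht0 htd2) (by linear_combination hc)
  have hD : (-(Complex.exp h * Complex.exp (h * α)) + Complex.exp h * Complex.exp (h * α) ^ 3) ≠ 0 := by
    intro hc; exact (mul_ne_zero (mul_ne_zero hq0 ht0) htd2) (by linear_combination hc)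
  have hexp1 : Complex.exp (h * (α + 1)) = Complex.exp (h * α) * Complex.exp h := by
    rw [← Complex.exp_add]
    congr 1
    ring
  have hlam : qnum h (α + 1) / qnum h α =
      (Complex.exp (h * α) * Complex.exp h - (Complex.exp (h * α))⁻¹ * (Complex.exp h)⁻¹) /
        (Complex.exp (h * α) - (Complex.exp (h * α))⁻¹) := by
    unfold qnum
    rw [Complex.exp_neg (h * (α + 1)), Complex.exp_neg (h * α), Complex.exp_neg h, hexp1,
      mul_inv, div_div_div_eq,
      mul_comm (Complex.exp (h * α) * Complex.exp h - (Complex.exp (h * α))⁻¹ * (Complex.exp h)⁻¹)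
        (Complex.exp h - (Complex.exp h)⁻¹),
      mul_div_mul_left _ _ hqd]
  have hb00 : bPlus h α 0 0 = (Complex.exp (h * α) - (Complex.exp (h * α))⁻¹)⁻¹ •
      ((-(Complex.exp h)⁻¹) • Kinv h α + Complex.exp (h * α) • 1) := by
    simp [bPlus, Complex.exp_neg]
  have hb11 : bPlus h α 1 1 = (Complex.exp (h * α) - (Complex.exp (h * α))⁻¹)⁻¹ •
      (Complex.exp h • Kinv h α - (Complex.exp (h * α))⁻¹ • 1) := by
    simp [bPlus, Complex.exp_neg]
  have key : ∀ p r : Fin 2 × Fin 2, (eOp4 h * bFst h α * eOp4 h) p r =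
      (eTL h p (0, 1) * eTL h (0, 1) r) • bPlus h α 0 0 +
        (eTL h p (1, 0) * eTL h (1, 0) r) • bPlus h α 1 1 := by
    intro p r
    have e00 : ∀ u : Fin 2 × Fin 2, eTL h u (0, 0) = 0 := by
      intro u; obtain ⟨a, b⟩ := u; fin_cases a <;> fin_cases b <;> simp [eTL, Prod.ext_iff]
    have e11 : ∀ u : Fin 2 × Fin 2, eTL h u (1, 1) = 0 := by
      intro u; obtain ⟨a, b⟩ := u; fin_cases a <;> fin_cases b <;> simp [eTL, Prod.ext_iff]
    have e00' : ∀ u : Fin 2 × Fin 2, eTL h (0, 0) u = 0 := by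
      intro u; simp [eTL, Prod.ext_iff]
    have e11' : ∀ u : Fin 2 × Fin 2, eTL h (1, 1) u = 0 := by
      intro u; simp [eTL, Prod.ext_iff]
    simp only [Matrix.mul_apply, Fintype.sum_prod_type, Fin.sum_univ_two, eOp4, bFst,
      Matrix.of_apply, e00, e11, e00', e11', zero_smul, zero_mul, mul_zero, smul_zero,
      add_zero, zero_add, smul_mul_assoc, mul_smul_comm, one_mul, mul_one, smul_smul]
    norm_num
    module
  have hd : Complex.exp (h * α) - (Complex.exp (h * α))⁻¹ =
      (Complex.exp (h * α) ^ 2 - 1) / Complex.exp (h * α) := by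
    field_simp
  refine Matrix.ext fun p r => ?_
  rw [Matrix.smul_apply, key, hlam, hb00, hb11, hd]
  show _ = _ • (eTL h p r • (1 : Module.End ℂ Verma))
  obtain ⟨a, b⟩ := p
  obtain ⟨c, d⟩ := r
  fin_cases a <;> fin_cases b <;> fin_cases c <;> fin_cases d <;>
    · norm_num [eTL, Prod.ext_iff, Complex.exp_neg]
      try (match_scalars <;> field_simp [htd2] <;> ring)
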